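/- Let K[z_k, ζ_k^1,…,ζ_k^N : k ∈ [n]] be the N_W = N polynomial superalgebra in n supervariables and O_n^★ its localization at z_{k,l} = z_k − z_l (1 ≤ k < l ≤ n). Let δ^0 := Σ_k ∂_{z_k} and δ^i := Σ_k ∂_{ζ_k^i} for i ∈ [N]. Then the translation-invariant subalgebra Ker(δ^0) ∩ Ker(δ^1) ∩ ⋯ ∩ Ker(δ^N) ⊂ O_n^★ equals the subalgebra O_n^{★T} generated by {z_{k,l}^{±1} : 1 ≤ k < l ≤ n} ∪ {ζ_{k,l}^i := ζ_k^i − ζ_l^i : i ∈ [N], 1 ≤ k < l ≤ n}. -/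

import Mathlib

open scoped TensorProduct

namespace SUSYW19

noncomputable section

variable (K : Type) [Field K] [CharZero K] (n N : ℕ)

/-- the multiplicative set generated by the differences `z_k − z_l` -/
def zDiffMonoid : Submonoid (MvPolynomial (Fin n) K) :=
  Submonoid.closure
    {p | ∃ k l : Fin n, k ≠ l ∧ p = MvPolynomial.X k - MvPolynomial.X l}

variable (O : Type) [CommRing O] [Algebra (MvPolynomial (Fin n) K) O]
  [IsLocalization (zDiffMonoid K n) O] [Algebra K O]
  [IsScalarTower K (MvPolynomial (Fin n) K) O]

/-- the model of `O_n^★`: the localization of `K[z_k]` at the `z_{k,l}`, tensored with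
the exterior algebra on the odd variables `ζ_k^i` -/
abbrev OStar : Type := O ⊗[K] ExteriorAlgebra K (Fin n × Fin N → K)

/-- the even variable `z_k` -/
def zVar (k : Fin n) : OStar K n N O :=
  (algebraMap (MvPolynomial (Fin n) K) O (MvPolynomial.X k)) ⊗ₜ[K] 1

/-- the difference `z_{k,l} = z_k − z_l` -/
def zDiff (k l : Fin n) : OStar K n N O :=
  (algebraMap (MvPolynomial (Fin n) K) O
    (MvPolynomial.X k - MvPolynomial.X l)) ⊗ₜ[K] 1

/-- the inverse `z_{k,l}^{-1}` -/
def zDiffInv (k l : Fin n) (h : k ≠ l) : OStar K n N O :=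
  (IsLocalization.mk' O (1 : MvPolynomial (Fin n) K)
    (⟨MvPolynomial.X k - MvPolynomial.X l,
      Submonoid.subset_closure ⟨k, l, h, rfl⟩⟩ : zDiffMonoid K n)) ⊗ₜ[K] 1

/-- the odd variable `ζ_k^i` -/
def zetaVar (k : Fin n) (i : Fin N) : OStar K n N O :=
  1 ⊗ₜ[K] ExteriorAlgebra.ι K (Pi.single (k, i) (1 : K))

section Aux
variable {K n N O}
set_option linter.unusedSectionVars false

/-- generators of the whole algebra -/
def GSet : Set (OStar K n N O) :=
  {x | (∃ k, x = zVar K n N O k) ∨ (∃ k l, ∃ h : k ≠ l, x = zDiffInv K n N O k l h) ∨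
    (∃ k i, x = zetaVar K n N O k i)}

/-- generators of the translation invariant subalgebra -/
def TSet : Set (OStar K n N O) :=
  {x | ∃ k l : Fin n, ∃ h : k < l,
    x = zDiff K n N O k l ∨ x = zDiffInv K n N O k l h.ne ∨
    ∃ i : Fin N, x = zetaVar K n N O k i - zetaVar K n N O l i}

lemma tmul_one_comm (o : O) (x : OStar K n N O) :
    (o ⊗ₜ[K] (1 : ExteriorAlgebra K (Fin n × Fin N → K))) * x
      = x * (o ⊗ₜ[K] 1) := by
  induction x using TensorProduct.induction_on with
  | zero => simp
  | tmul a b => simp [Algebra.TensorProduct.tmul_mul_tmul, mul_comm]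
  | add a b ha hb => simp [mul_add, add_mul, ha, hb]

lemma zeta_mul_zeta (k l : Fin n) (i j : Fin N) :
    zetaVar K n N O k i * zetaVar K n N O l j
      = -(zetaVar K n N O l j * zetaVar K n N O k i) := by
  simp only [zetaVar, Algebra.TensorProduct.tmul_mul_tmul, one_mul]
  rw [← TensorProduct.tmul_neg]
  congr 1
  have := ExteriorAlgebra.ι_add_mul_swap (R := K)
    (M := Fin n × Fin N → K) (Pi.single (k, i) 1) (Pi.single (l, j) 1)
  exact eq_neg_of_add_eq_zero_left this

lemma zeta_sq (k : Fin n) (i : Fin N) :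
    zetaVar K n N O k i * zetaVar K n N O k i = 0 := by
  simp [zetaVar, Algebra.TensorProduct.tmul_mul_tmul, ExteriorAlgebra.ι_sq_zero]

lemma zDiff_eq (k l : Fin n) :
    zDiff K n N O k l = zVar K n N O k - zVar K n N O l := by
  simp [zDiff, zVar, map_sub, TensorProduct.sub_tmul]

lemma zDiffInv_mul_zDiff (k l : Fin n) (h : k ≠ l) :
    zDiffInv K n N O k l h * zDiff K n N O k l = 1 := by
  simp only [zDiffInv, zDiff, Algebra.TensorProduct.tmul_mul_tmul, one_mul]
  rw [IsLocalization.mk'_spec (M := zDiffMonoid K n) O 1]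
  simp [Algebra.TensorProduct.one_def]

lemma zDiff_comm (k l : Fin n) (x : OStar K n N O) :
    zDiff K n N O k l * x = x * zDiff K n N O k l := by
  rw [zDiff]; exact tmul_one_comm _ x

lemma zDiff_mul_zDiffInv (k l : Fin n) (h : k ≠ l) :
    zDiff K n N O k l * zDiffInv K n N O k l h = 1 := by
  rw [zDiff_comm]; exact zDiffInv_mul_zDiff k l h

lemma zDiffInv_neg (k l : Fin n) (h : k ≠ l) :
    zDiffInv K n N O k l h = -(zDiffInv K n N O l k h.symm) := by
  have h1 := zDiffInv_mul_zDiff (K := K) (N := N) (O := O) k l h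
  have h2 : (-(zDiffInv K n N O l k h.symm)) * zDiff K n N O k l = 1 := by
    have : zDiff K n N O k l = -(zDiff K n N O l k) := by
      rw [zDiff, zDiff, ← TensorProduct.neg_tmul, ← map_neg, neg_sub]
    rw [this, mul_neg, neg_mul, neg_neg, zDiffInv_mul_zDiff]
  have h3 : zDiff K n N O k l * (-(zDiffInv K n N O l k h.symm)) = 1 := by
    rw [zDiff_comm]; exact h2
  calc zDiffInv K n N O k l h
      = zDiffInv K n N O k l h * (zDiff K n N O k l * (-(zDiffInv K n N O l k h.symm))) := by
        rw [h3, mul_one]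
    _ = (zDiffInv K n N O k l h * zDiff K n N O k l) * (-(zDiffInv K n N O l k h.symm)) := by
        rw [mul_assoc]
    _ = -(zDiffInv K n N O l k h.symm) := by rw [h1, one_mul]


lemma zDiff_mem (k l : Fin n) (h : k ≠ l) :
    zDiff K n N O k l ∈ Algebra.adjoin K (TSet (K := K) (n := n) (N := N) (O := O)) := by
  rcases h.lt_or_gt with hlt | hlt
  · exact Algebra.subset_adjoin ⟨k, l, hlt, Or.inl rfl⟩
  · have : zDiff K n N O k l = -(zDiff K n N O l k) := by
      rw [zDiff, zDiff, ← TensorProduct.neg_tmul, ← map_neg, neg_sub]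
    rw [this]
    exact neg_mem (Algebra.subset_adjoin ⟨l, k, hlt, Or.inl rfl⟩)

lemma zDiffInv_mem (k l : Fin n) (h : k ≠ l) :
    zDiffInv K n N O k l h ∈ Algebra.adjoin K (TSet (K := K) (n := n) (N := N) (O := O)) := by
  rcases h.lt_or_gt with hlt | hlt
  · exact Algebra.subset_adjoin ⟨k, l, hlt, Or.inr (Or.inl rfl)⟩
  · rw [zDiffInv_neg k l h]
    exact neg_mem (Algebra.subset_adjoin ⟨l, k, hlt, Or.inr (Or.inl rfl)⟩)

lemma zetaDiff_mem (k l : Fin n) (i : Fin N) (h : k ≠ l) :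
    zetaVar K n N O k i - zetaVar K n N O l i
      ∈ Algebra.adjoin K (TSet (K := K) (n := n) (N := N) (O := O)) := by
  rcases h.lt_or_gt with hlt | hlt
  · exact Algebra.subset_adjoin ⟨k, l, hlt, Or.inr (Or.inr ⟨i, rfl⟩)⟩
  · rw [show zetaVar K n N O k i - zetaVar K n N O l i
        = -(zetaVar K n N O l i - zetaVar K n N O k i) from (neg_sub _ _).symm]
    exact neg_mem (Algebra.subset_adjoin ⟨l, k, hlt, Or.inr (Or.inr ⟨i, rfl⟩)⟩)

lemma tmul_one_mem (o : O) :
    o ⊗ₜ[K] (1 : ExteriorAlgebra K (Fin n × Fin N → K))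
      ∈ Algebra.adjoin K (GSet (K := K) (n := n) (N := N) (O := O)) := by
  obtain ⟨⟨p, s⟩, rfl⟩ := IsLocalization.mk'_surjective (zDiffMonoid K n) o
  dsimp only
  rw [IsLocalization.mk'_eq_mul_mk'_one,
    show (algebraMap (MvPolynomial (Fin n) K) O p * IsLocalization.mk' O 1 s) ⊗ₜ[K]
        (1 : ExteriorAlgebra K (Fin n × Fin N → K))
      = (algebraMap (MvPolynomial (Fin n) K) O p ⊗ₜ[K] 1) * (IsLocalization.mk' O 1 s ⊗ₜ[K] 1) by
      rw [Algebra.TensorProduct.tmul_mul_tmul, one_mul]]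
  refine mul_mem ?_ ?_
  · induction p using MvPolynomial.induction_on with
    | C a =>
        rw [show (MvPolynomial.C a : MvPolynomial (Fin n) K)
            = algebraMap K (MvPolynomial (Fin n) K) a from rfl,
          ← IsScalarTower.algebraMap_apply,
          show (algebraMap K O a) ⊗ₜ[K] (1 : ExteriorAlgebra K (Fin n × Fin N → K))
            = algebraMap K (OStar K n N O) a from rfl]
        exact algebraMap_mem _ a
    | add p q hp hq =>
        rw [map_add, TensorProduct.add_tmul]; exact add_mem hp hq
    | mul_X p k hp =>
        rw [map_mul,
          show (algebraMap (MvPolynomial (Fin n) K) O p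
              * algebraMap (MvPolynomial (Fin n) K) O (MvPolynomial.X k)) ⊗ₜ[K]
              (1 : ExteriorAlgebra K (Fin n × Fin N → K))
            = (algebraMap (MvPolynomial (Fin n) K) O p ⊗ₜ[K] 1)
              * (algebraMap (MvPolynomial (Fin n) K) O (MvPolynomial.X k) ⊗ₜ[K] 1) by
            rw [Algebra.TensorProduct.tmul_mul_tmul, one_mul]]
        exact mul_mem hp (Algebra.subset_adjoin (Or.inl ⟨k, rfl⟩))
  · obtain ⟨sval, hs⟩ := s
    induction hs using Submonoid.closure_induction with
    | mem x hx =>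
        obtain ⟨k, l, hkl, rfl⟩ := hx
        exact Algebra.subset_adjoin (Or.inr (Or.inl ⟨k, l, hkl, rfl⟩))
    | one =>
        rw [show (⟨1, _⟩ : zDiffMonoid K n) = 1 from rfl, IsLocalization.mk'_one, map_one]
        exact one_mem _
    | mul x y hx hy px py =>
        rw [show (⟨x * y, _⟩ : zDiffMonoid K n) = ⟨x, hx⟩ * ⟨y, hy⟩ from rfl,
          ← one_mul (1 : MvPolynomial (Fin n) K), IsLocalization.mk'_mul,
          show (IsLocalization.mk' O 1 (⟨x, hx⟩ : zDiffMonoid K n)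
              * IsLocalization.mk' O 1 (⟨y, hy⟩ : zDiffMonoid K n)) ⊗ₜ[K]
              (1 : ExteriorAlgebra K (Fin n × Fin N → K))
            = (IsLocalization.mk' O 1 (⟨x, hx⟩ : zDiffMonoid K n) ⊗ₜ[K] 1)
              * (IsLocalization.mk' O 1 (⟨y, hy⟩ : zDiffMonoid K n) ⊗ₜ[K] 1) by
            rw [Algebra.TensorProduct.tmul_mul_tmul, one_mul]]
        exact mul_mem px py

lemma one_tmul_mem (w : ExteriorAlgebra K (Fin n × Fin N → K)) :
    (1 : O) ⊗ₜ[K] w ∈ Algebra.adjoin K (GSet (K := K) (n := n) (N := N) (O := O)) := by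
  induction w using ExteriorAlgebra.induction with
  | algebraMap r =>
      rw [Algebra.algebraMap_eq_smul_one, TensorProduct.tmul_smul]
      exact Subalgebra.smul_mem _ (one_mem _) r
  | ι v =>
      rw [show v = ∑ j : Fin n × Fin N, Pi.single j (v j) from (Finset.univ_sum_single v).symm,
        map_sum, TensorProduct.tmul_sum]
      refine sum_mem fun j _ => ?_
      rw [show (Pi.single j (v j) : Fin n × Fin N → K)
            = v j • (Pi.single j 1 : Fin n × Fin N → K) by
          rw [← Pi.single_smul, smul_eq_mul, mul_one],
        map_smul, TensorProduct.tmul_smul]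
      refine Subalgebra.smul_mem _ ?_ _
      exact Algebra.subset_adjoin (Or.inr (Or.inr ⟨j.1, j.2, by rw [zetaVar]⟩))
  | mul a b ha hb =>
      rw [show (1 : O) ⊗ₜ[K] (a * b) = ((1 : O) ⊗ₜ[K] a) * ((1 : O) ⊗ₜ[K] b) by
        rw [Algebra.TensorProduct.tmul_mul_tmul, one_mul]]
      exact mul_mem ha hb
  | add a b ha hb =>
      rw [TensorProduct.tmul_add]; exact add_mem ha hb

lemma adjoin_GSet :
    Algebra.adjoin K (GSet (K := K) (n := n) (N := N) (O := O)) = ⊤ := by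
  rw [eq_top_iff]
  rintro x -
  induction x using TensorProduct.induction_on with
  | zero => exact zero_mem _
  | add a b ha hb => exact add_mem ha hb
  | tmul o w =>
      rw [show o ⊗ₜ[K] w = (o ⊗ₜ[K] 1) * ((1 : O) ⊗ₜ[K] w) by
        rw [Algebra.TensorProduct.tmul_mul_tmul, mul_one, one_mul]]
      exact mul_mem (tmul_one_mem o) (one_tmul_mem w)


section Ops
variable (J : OStar K n N O →ₐ[K] OStar K n N O)
variable (d0 : OStar K n N O →ₗ[K] OStar K n N O)
variable (d : Fin N → OStar K n N O →ₗ[K] OStar K n N O)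

lemma mem_adjoin_GSet (x : OStar K n N O) :
    x ∈ Algebra.adjoin K (GSet (K := K) (n := n) (N := N) (O := O)) := by
  rw [adjoin_GSet]; exact Algebra.mem_top

lemma d0_one (hd0L : ∀ x y, d0 (x * y) = d0 x * y + x * d0 y) : d0 1 = 0 := by
  have h : d0 1 = d0 1 + d0 1 := by
    have h := hd0L 1 1
    rwa [one_mul, mul_one, one_mul] at h
  have h2 : d0 1 + d0 1 = d0 1 + 0 := by rw [add_zero]; exact h.symm
  exact add_left_cancel h2

lemma di_one (i : Fin N) (hdL : ∀ i x y, d i (x * y) = d i x * y + J x * d i y) :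
    d i 1 = 0 := by
  have h : d i 1 = d i 1 + d i 1 := by
    have h := hdL i 1 1
    rwa [one_mul, mul_one, map_one J, one_mul] at h
  have h2 : d i 1 + d i 1 = d i 1 + 0 := by rw [add_zero]; exact h.symm
  exact add_left_cancel h2

lemma d0_algebraMap (hd0L : ∀ x y, d0 (x * y) = d0 x * y + x * d0 y) (c : K) :
    d0 (algebraMap K (OStar K n N O) c) = 0 := by
  rw [Algebra.algebraMap_eq_smul_one, map_smul, d0_one d0 hd0L, smul_zero]

lemma di_algebraMap (i : Fin N) (hdL : ∀ i x y, d i (x * y) = d i x * y + J x * d i y)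
    (c : K) : d i (algebraMap K (OStar K n N O) c) = 0 := by
  rw [Algebra.algebraMap_eq_smul_one, map_smul, di_one J d i hdL, smul_zero]

lemma d0_zDiff (hd0z : ∀ k, d0 (zVar K n N O k) = 1) (k l : Fin n) :
    d0 (zDiff K n N O k l) = 0 := by
  rw [zDiff_eq, map_sub, hd0z, hd0z, sub_self]

lemma di_zDiff (i : Fin N) (hdz : ∀ i k, d i (zVar K n N O k) = 0) (k l : Fin n) :
    d i (zDiff K n N O k l) = 0 := by
  rw [zDiff_eq, map_sub, hdz, hdz, sub_self]

lemma d0_zDiffInv (hd0L : ∀ x y, d0 (x * y) = d0 x * y + x * d0 y)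
    (hd0z : ∀ k, d0 (zVar K n N O k) = 1) (k l : Fin n) (h : k ≠ l) :
    d0 (zDiffInv K n N O k l h) = 0 := by
  have h1 : d0 (zDiffInv K n N O k l h * zDiff K n N O k l) = 0 := by
    rw [zDiffInv_mul_zDiff, d0_one d0 hd0L]
  rw [hd0L, d0_zDiff d0 hd0z, mul_zero, add_zero] at h1
  calc d0 (zDiffInv K n N O k l h)
      = d0 (zDiffInv K n N O k l h) * (zDiff K n N O k l * zDiffInv K n N O k l h) := by
        rw [zDiff_mul_zDiffInv, mul_one]
    _ = (d0 (zDiffInv K n N O k l h) * zDiff K n N O k l) * zDiffInv K n N O k l h := by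
        rw [mul_assoc]
    _ = 0 := by rw [h1, zero_mul]

lemma di_zDiffInv (i : Fin N) (hdL : ∀ i x y, d i (x * y) = d i x * y + J x * d i y)
    (hdz : ∀ i k, d i (zVar K n N O k) = 0) (k l : Fin n) (h : k ≠ l) :
    d i (zDiffInv K n N O k l h) = 0 := by
  have h1 : d i (zDiffInv K n N O k l h * zDiff K n N O k l) = 0 := by
    rw [zDiffInv_mul_zDiff, di_one J d i hdL]
  rw [hdL, di_zDiff d i hdz, mul_zero, add_zero] at h1
  calc d i (zDiffInv K n N O k l h)
      = d i (zDiffInv K n N O k l h) * (zDiff K n N O k l * zDiffInv K n N O k l h) := by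
        rw [zDiff_mul_zDiffInv, mul_one]
    _ = (d i (zDiffInv K n N O k l h) * zDiff K n N O k l) * zDiffInv K n N O k l h := by
        rw [mul_assoc]
    _ = 0 := by rw [h1, zero_mul]

lemma x_mul_zeta (hJO : ∀ o : O, J (o ⊗ₜ[K] 1) = o ⊗ₜ[K] 1)
    (hJz : ∀ k i, J (zetaVar K n N O k i) = -(zetaVar K n N O k i))
    (k : Fin n) (i : Fin N) (x : OStar K n N O) :
    x * zetaVar K n N O k i = zetaVar K n N O k i * J x := by
  induction mem_adjoin_GSet x using Algebra.adjoin_induction with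
  | mem g hg =>
      rcases hg with ⟨k', rfl⟩ | ⟨k', l', h', rfl⟩ | ⟨k', i', rfl⟩
      · rw [zVar, hJO, ← tmul_one_comm]
      · rw [zDiffInv, hJO, ← tmul_one_comm]
      · rw [hJz, mul_neg, zeta_mul_zeta]
  | algebraMap r =>
      rw [AlgHom.commutes, Algebra.commutes]
  | add a b ha hb pa pb => rw [add_mul, map_add, mul_add, pa, pb]
  | mul a b ha hb pa pb =>
      rw [map_mul, mul_assoc, pb, ← mul_assoc, pa, mul_assoc]

lemma J_sq (hJO : ∀ o : O, J (o ⊗ₜ[K] 1) = o ⊗ₜ[K] 1)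
    (hJz : ∀ k i, J (zetaVar K n N O k i) = -(zetaVar K n N O k i))
    (x : OStar K n N O) : J (J x) = x := by
  induction mem_adjoin_GSet x using Algebra.adjoin_induction with
  | mem g hg =>
      rcases hg with ⟨k', rfl⟩ | ⟨k', l', h', rfl⟩ | ⟨k', i', rfl⟩
      · rw [zVar, hJO, hJO]
      · rw [zDiffInv, hJO, hJO]
      · rw [hJz, map_neg, hJz, neg_neg]
  | algebraMap r => rw [AlgHom.commutes, AlgHom.commutes]
  | add a b ha hb pa pb => rw [map_add, map_add, pa, pb]
  | mul a b ha hb pa pb => rw [map_mul, map_mul, pa, pb]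

lemma nil_mono (a b : ℕ) (x : OStar K n N O) (hab : a ≤ b) (hx : (d0 ^ a) x = 0) :
    (d0 ^ b) x = 0 := by
  rw [show b = (b - a) + a by omega, pow_add, Module.End.mul_apply, hx, map_zero]

lemma nil_mul (hd0L : ∀ x y, d0 (x * y) = d0 x * y + x * d0 y) :
    ∀ (m a b : ℕ) (x y : OStar K n N O), a + b ≤ m →
      (d0 ^ a) x = 0 → (d0 ^ b) y = 0 → (d0 ^ (a + b)) (x * y) = 0 := by
  intro m
  induction m with
  | zero =>
      intro a b x y hab hx hy
      have ha : a = 0 := by omega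
      subst ha
      have : x = 0 := by rwa [pow_zero, Module.End.one_apply] at hx
      rw [this, zero_mul, map_zero]
  | succ m ih =>
      intro a b x y hab hx hy
      match a, hx with
      | 0, hx =>
          have : x = 0 := by rwa [pow_zero, Module.End.one_apply] at hx
          rw [this, zero_mul, map_zero]
      | a' + 1, hx =>
        match b, hy with
        | 0, hy =>
            have : y = 0 := by rwa [pow_zero, Module.End.one_apply] at hy
            rw [this, mul_zero, map_zero]
        | b' + 1, hy =>
            have hx' : (d0 ^ a') (d0 x) = 0 := by
              rw [← Module.End.mul_apply, ← pow_succ]; exact hx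
            have hy' : (d0 ^ b') (d0 y) = 0 := by
              rw [← Module.End.mul_apply, ← pow_succ]; exact hy
            have e1 : a' + 1 + (b' + 1) = (a' + (b' + 1)) + 1 := by omega
            rw [e1, pow_succ, Module.End.mul_apply, hd0L, map_add]
            have t1 : (d0 ^ (a' + (b' + 1))) (d0 x * y) = 0 :=
              ih a' (b' + 1) (d0 x) y (by omega) hx' hy
            have t2 : (d0 ^ (a' + 1 + b')) (x * d0 y) = 0 :=
              ih (a' + 1) b' x (d0 y) (by omega) hx hy'
            rw [show a' + 1 + b' = a' + (b' + 1) by omega] at t2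
            rw [t1, t2, add_zero]

lemma locally_nilpotent (hd0L : ∀ x y, d0 (x * y) = d0 x * y + x * d0 y)
    (hd0z : ∀ k, d0 (zVar K n N O k) = 1)
    (hd0zeta : ∀ k i, d0 (zetaVar K n N O k i) = 0)
    (x : OStar K n N O) : ∃ m : ℕ, (d0 ^ m) x = 0 := by
  induction mem_adjoin_GSet x using Algebra.adjoin_induction with
  | mem g hg =>
      rcases hg with ⟨k', rfl⟩ | ⟨k', l', h', rfl⟩ | ⟨k', i', rfl⟩
      · exact ⟨2, by rw [pow_succ, Module.End.mul_apply, hd0z, pow_one, d0_one d0 hd0L]⟩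
      · exact ⟨1, by rw [pow_one, d0_zDiffInv d0 hd0L hd0z]⟩
      · exact ⟨1, by rw [pow_one, hd0zeta]⟩
  | algebraMap r => exact ⟨1, by rw [pow_one, d0_algebraMap d0 hd0L]⟩
  | add a b ha hb pa pb =>
      obtain ⟨ma, hma⟩ := pa; obtain ⟨mb, hmb⟩ := pb
      exact ⟨max ma mb, by
        rw [map_add, nil_mono d0 ma _ a (le_max_left _ _) hma,
          nil_mono d0 mb _ b (le_max_right _ _) hmb, add_zero]⟩
  | mul a b ha hb pa pb =>
      obtain ⟨ma, hma⟩ := pa; obtain ⟨mb, hmb⟩ := pb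
      exact ⟨ma + mb, nil_mul d0 hd0L (ma + mb) ma mb a b le_rfl hma hmb⟩


lemma d0_pow_leibniz (hd0L : ∀ x y, d0 (x * y) = d0 x * y + x * d0 y) (m : ℕ)
    (x y : OStar K n N O) :
    (d0 ^ m) (x * y) = ∑ k ∈ Finset.range (m + 1),
      (m.choose k : K) • ((d0 ^ k) x * (d0 ^ (m - k)) y) := by
  induction m with
  | zero => simp
  | succ m ih =>
      have key : (d0 ^ (m + 1)) (x * y)
          = ∑ k ∈ Finset.range (m + 1), (m.choose k : K) •
              ((d0 ^ (k + 1)) x * (d0 ^ (m - k)) y + (d0 ^ k) x * (d0 ^ (m - k + 1)) y) := by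
        rw [pow_succ', Module.End.mul_apply, ih, map_sum]
        refine Finset.sum_congr rfl fun k hk => ?_
        rw [map_smul, hd0L]
        congr 2
        · rw [pow_succ', Module.End.mul_apply]
        · rw [pow_succ', Module.End.mul_apply]
      rw [key]
      simp only [smul_add]
      rw [Finset.sum_add_distrib]
      have hA : (∑ k ∈ Finset.range (m + 1),
            (m.choose k : K) • ((d0 ^ (k + 1)) x * (d0 ^ (m - k)) y))
          = ∑ j ∈ Finset.range (m + 2),
              (if j = 0 then (0 : K) else (m.choose (j - 1) : K))
                • ((d0 ^ j) x * (d0 ^ (m + 1 - j)) y) := by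
        rw [Finset.sum_range_succ' (fun j =>
          (if j = 0 then (0 : K) else (m.choose (j - 1) : K))
            • ((d0 ^ j) x * (d0 ^ (m + 1 - j)) y)) (m + 1)]
        rw [show (if (0 : ℕ) = 0 then (0 : K) else (m.choose (0 - 1) : K))
            • ((d0 ^ 0) x * (d0 ^ (m + 1 - 0)) y) = 0 by rw [if_pos rfl, zero_smul],
          add_zero]
        refine Finset.sum_congr rfl fun k hk => ?_
        rw [if_neg (Nat.succ_ne_zero k), Nat.succ_sub_one,
          show m + 1 - (k + 1) = m - k by omega]
      have hB : (∑ k ∈ Finset.range (m + 1),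
            (m.choose k : K) • ((d0 ^ k) x * (d0 ^ (m - k + 1)) y))
          = ∑ j ∈ Finset.range (m + 2),
              (m.choose j : K) • ((d0 ^ j) x * (d0 ^ (m + 1 - j)) y) := by
        rw [Finset.sum_range_succ (fun j =>
          (m.choose j : K) • ((d0 ^ j) x * (d0 ^ (m + 1 - j)) y)) (m + 1)]
        rw [Nat.choose_succ_self, Nat.cast_zero, zero_smul, add_zero]
        refine Finset.sum_congr rfl fun k hk => ?_
        have hk' : k ≤ m := Nat.lt_succ_iff.mp (Finset.mem_range.mp hk)
        rw [show m - k + 1 = m + 1 - k by omega]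
      rw [hA, hB, ← Finset.sum_add_distrib]
      refine Finset.sum_congr rfl fun k _ => ?_
      rw [← add_smul]
      have hco : (if k = 0 then (0 : K) else (m.choose (k - 1) : K)) + (m.choose k : K)
          = ((m + 1).choose k : K) := by
        cases k with
        | zero => simp
        | succ i =>
            rw [if_neg (Nat.succ_ne_zero i), Nat.succ_sub_one,
              Nat.choose_succ_succ, Nat.cast_add]
      rw [hco]

/-- the truncated exponential `∑ (-z)^k/k! d0^k x` -/
def expS (z : OStar K n N O) (d0 : OStar K n N O →ₗ[K] OStar K n N O) (M : ℕ)
    (x : OStar K n N O) : OStar K n N O :=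
  ∑ k ∈ Finset.range M, ((-1 : K) ^ k / (k.factorial : K)) • (z ^ k * (d0 ^ k) x)

variable (z : OStar K n N O)

lemma expS_stab (m M : ℕ) (x : OStar K n N O) (h : (d0 ^ m) x = 0) (hmM : m ≤ M) :
    expS z d0 M x = expS z d0 m x := by
  induction M, hmM using Nat.le_induction with
  | base => rfl
  | succ M hM ih =>
      rw [expS, Finset.sum_range_succ, nil_mono d0 m M x hM h, mul_zero, smul_zero, add_zero]
      exact ih

lemma expS_add (M : ℕ) (x y : OStar K n N O) :
    expS z d0 M (x + y) = expS z d0 M x + expS z d0 M y := by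
  simp only [expS, map_add, mul_add, smul_add, Finset.sum_add_distrib]

lemma coeff_id (j l : ℕ) :
    ((-1 : K) ^ (j + l) / ((j + l).factorial : K)) * ((j + l).choose j : K)
      = ((-1 : K) ^ j / (j.factorial : K)) * ((-1 : K) ^ l / (l.factorial : K)) := by
  have h := Nat.choose_mul_factorial_mul_factorial (Nat.le_add_right j l)
  rw [Nat.add_sub_cancel_left] at h
  have hK : ((j + l).choose j : K) * (j.factorial : K) * (l.factorial : K)
      = ((j + l).factorial : K) := by exact_mod_cast congrArg (fun t : ℕ => (t : K)) h
  have hj : (j.factorial : K) ≠ 0 := Nat.cast_ne_zero.mpr (Nat.factorial_ne_zero j)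
  have hl : (l.factorial : K) ≠ 0 := Nat.cast_ne_zero.mpr (Nat.factorial_ne_zero l)
  have hjl : (((j + l).factorial : ℕ) : K) ≠ 0 := Nat.cast_ne_zero.mpr (Nat.factorial_ne_zero _)
  field_simp
  rw [pow_add]
  linear_combination ((-1 : K) ^ j * (-1 : K) ^ l) * hK

lemma expS_mul (hd0L : ∀ x y, d0 (x * y) = d0 x * y + x * d0 y)
    (hzc : ∀ w, z * w = w * z) (a b : ℕ) (x y : OStar K n N O)
    (hx : (d0 ^ a) x = 0) (hy : (d0 ^ b) y = 0) :
    expS z d0 (a + b) (x * y) = expS z d0 a x * expS z d0 b y := by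
  classical
  set M := a + b with hM
  set F : ℕ × ℕ → OStar K n N O := fun p =>
    (((-1 : K) ^ p.1 / (p.1.factorial : K)) * ((-1 : K) ^ p.2 / (p.2.factorial : K))) •
      (z ^ (p.1 + p.2) * ((d0 ^ p.1) x * (d0 ^ p.2) y)) with hF
  have hzpow : ∀ (k : ℕ) (w : OStar K n N O), z ^ k * w = w * z ^ k := by
    intro k w
    induction k with
    | zero => rw [pow_zero, one_mul, mul_one]
    | succ k ih =>
        rw [pow_succ, mul_assoc, hzc w, ← mul_assoc, ih, mul_assoc]
  have hFvanish : ∀ p : ℕ × ℕ, a ≤ p.1 ∨ b ≤ p.2 → F p = 0 := by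
    rintro ⟨p1, p2⟩ (hp | hp)
    · have : (d0 ^ p1) x = 0 := nil_mono d0 a p1 x hp hx
      simp only [hF, this, zero_mul, mul_zero, smul_zero]
    · have : (d0 ^ p2) y = 0 := nil_mono d0 b p2 y hp hy
      simp only [hF, this, mul_zero, smul_zero]
  have hterm : ∀ j l : ℕ,
      (((-1 : K) ^ j / (j.factorial : K)) • (z ^ j * (d0 ^ j) x))
        * (((-1 : K) ^ l / (l.factorial : K)) • (z ^ l * (d0 ^ l) y)) = F (j, l) := by
    intro j l
    rw [smul_mul_assoc, Algebra.mul_smul_comm, smul_smul, hF]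
    congr 1
    rw [mul_assoc, ← mul_assoc ((d0 ^ j) x) (z ^ l) ((d0 ^ l) y),
      ← hzpow l ((d0 ^ j) x), mul_assoc (z ^ l) _ _, ← mul_assoc (z ^ j) (z ^ l) _, ← pow_add]
  have hRHS : expS z d0 a x * expS z d0 b y
      = ∑ j ∈ Finset.range M, ∑ l ∈ Finset.range M, F (j, l) := by
    rw [expS, expS, Finset.sum_mul_sum]
    rw [Finset.sum_congr rfl fun j _ => Finset.sum_congr rfl fun l _ => hterm j l]
    have hinner : ∀ j : ℕ, (∑ l ∈ Finset.range b, F (j, l))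
        = ∑ l ∈ Finset.range M, F (j, l) := by
      intro j
      refine Finset.sum_subset (Finset.range_subset_range.mpr (by omega)) ?_
      intro l _ hlb
      exact hFvanish (j, l) (Or.inr (by simpa using hlb))
    rw [Finset.sum_congr rfl fun j _ => hinner j]
    refine Finset.sum_subset (Finset.range_subset_range.mpr (by omega)) ?_
    intro j _ hja
    exact Finset.sum_eq_zero fun l _ => hFvanish (j, l) (Or.inl (by simpa using hja))
  have hLHS : expS z d0 M (x * y)
      = ∑ k ∈ Finset.range M, ∑ j ∈ Finset.range (k + 1), F (j, k - j) := by
    rw [expS]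
    refine Finset.sum_congr rfl fun k _ => ?_
    rw [d0_pow_leibniz d0 hd0L k x y, Finset.mul_sum, Finset.smul_sum]
    refine Finset.sum_congr rfl fun j hj => ?_
    have hjk : j ≤ k := Nat.lt_succ_iff.mp (Finset.mem_range.mp hj)
    rw [Algebra.mul_smul_comm, smul_smul]
    have hco := coeff_id (K := K) j (k - j)
    rw [show j + (k - j) = k by omega] at hco
    have hFv : F (j, k - j)
        = (((-1 : K) ^ j / (j.factorial : K)) * ((-1 : K) ^ (k - j) / ((k - j).factorial : K)))
          • (z ^ k * ((d0 ^ j) x * (d0 ^ (k - j)) y)) := by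
      simp only [hF]
      rw [show j + (k - j) = k by omega]
    rw [hFv, hco]
  have htri : ∑ k ∈ Finset.range M, ∑ j ∈ Finset.range (k + 1), F (j, k - j)
      = ∑ j ∈ Finset.range M, ∑ l ∈ Finset.range M, F (j, l) := by
    calc ∑ k ∈ Finset.range M, ∑ j ∈ Finset.range (k + 1), F (j, k - j)
        = ∑ q ∈ (Finset.range M).sigma (fun k => Finset.range (k + 1)),
            F (q.2, q.1 - q.2) := by
          rw [Finset.sum_sigma' (Finset.range M) (fun k => Finset.range (k + 1))
            (fun k j => F (j, k - j))]
      _ = ∑ p ∈ ((Finset.range M ×ˢ Finset.range M).filter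
            fun p : ℕ × ℕ => p.1 + p.2 < M), F p := by
          refine Finset.sum_nbij' (i := fun q : Σ _ : ℕ, ℕ => (q.2, q.1 - q.2))
            (j := fun p : ℕ × ℕ => ⟨p.1 + p.2, p.1⟩) ?_ ?_ ?_ ?_ ?_
          · rintro ⟨k, j⟩ hq
            simp only [Finset.mem_sigma, Finset.mem_range] at hq
            simp only [Finset.mem_filter, Finset.mem_product, Finset.mem_range]
            omega
          · rintro ⟨p1, p2⟩ hp
            simp only [Finset.mem_filter, Finset.mem_product, Finset.mem_range] at hp
            simp only [Finset.mem_sigma, Finset.mem_range]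
            omega
          · rintro ⟨k, j⟩ hq
            simp only [Finset.mem_sigma, Finset.mem_range] at hq
            simp only [Sigma.mk.inj_iff]
            exact ⟨by omega, heq_of_eq rfl⟩
          · rintro ⟨p1, p2⟩ _
            show (p1, p1 + p2 - p1) = (p1, p2)
            rw [Nat.add_sub_cancel_left]
          · rintro ⟨k, j⟩ hq
            rfl
      _ = ∑ p ∈ (Finset.range M ×ˢ Finset.range M), F p := by
          refine Finset.sum_filter_of_ne ?_
          intro p hp hFp
          by_contra hc
          exact hFp (hFvanish p (by omega))
      _ = ∑ j ∈ Finset.range M, ∑ l ∈ Finset.range M, F (j, l) := by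
          rw [Finset.sum_product]
  rw [hLHS, htri, hRHS]


lemma expS_one (x : OStar K n N O) : expS z d0 1 x = x := by
  simp [expS]

lemma expS_zVar (hd0L : ∀ x y, d0 (x * y) = d0 x * y + x * d0 y)
    (hd0z : ∀ k, d0 (zVar K n N O k) = 1) (k : Fin n) :
    expS z d0 2 (zVar K n N O k) = zVar K n N O k - z := by
  rw [expS, Finset.sum_range_succ, Finset.sum_range_one, pow_zero d0, pow_one d0,
    Module.End.one_apply, hd0z k, mul_one, pow_zero, pow_zero, pow_one, pow_one, one_mul]
  rw [Nat.factorial_zero, Nat.factorial_one, Nat.cast_one, div_one, div_one, one_smul,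
    neg_smul, one_smul, sub_eq_add_neg]

lemma zVar_comm (k : Fin n) (x : OStar K n N O) :
    zVar K n N O k * x = x * zVar K n N O k := by
  rw [zVar]; exact tmul_one_comm _ x

lemma dT_zero (i : Fin N)
    (hdL : ∀ i x y, d i (x * y) = d i x * y + J x * d i y)
    (hdz : ∀ i k, d i (zVar K n N O k) = 0)
    (hdzeta : ∀ i k j, d i (zetaVar K n N O k j) = if j = i then 1 else 0)
    (g : OStar K n N O) (hg : g ∈ TSet (K := K) (n := n) (N := N) (O := O)) :
    d i g = 0 := by
  obtain ⟨k, l, hkl, hg⟩ := hg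
  rcases hg with rfl | rfl | ⟨i', rfl⟩
  · exact di_zDiff d i hdz k l
  · exact di_zDiffInv J d i hdL hdz k l hkl.ne
  · rw [map_sub, hdzeta, hdzeta, sub_self]

lemma d0T_zero (hd0L : ∀ x y, d0 (x * y) = d0 x * y + x * d0 y)
    (hd0z : ∀ k, d0 (zVar K n N O k) = 1)
    (hd0zeta : ∀ k i, d0 (zetaVar K n N O k i) = 0)
    (g : OStar K n N O) (hg : g ∈ TSet (K := K) (n := n) (N := N) (O := O)) :
    d0 g = 0 := by
  obtain ⟨k, l, hkl, hg⟩ := hg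
  rcases hg with rfl | rfl | ⟨i', rfl⟩
  · exact d0_zDiff d0 hd0z k l
  · exact d0_zDiffInv d0 hd0L hd0z k l hkl.ne
  · rw [map_sub, hd0zeta, hd0zeta, sub_self]

lemma sigma_map_mul (i : Fin N) (kk : Fin n)
    (hJO : ∀ o : O, J (o ⊗ₜ[K] 1) = o ⊗ₜ[K] 1)
    (hJz : ∀ k i, J (zetaVar K n N O k i) = -(zetaVar K n N O k i))
    (hdL : ∀ i x y, d i (x * y) = d i x * y + J x * d i y)
    (x y : OStar K n N O) :
    (x * y) - zetaVar K n N O kk i * d i (x * y)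
      = (x - zetaVar K n N O kk i * d i x) * (y - zetaVar K n N O kk i * d i y) := by
  set Z := zetaVar K n N O kk i with hZ
  have h1 : x * (Z * d i y) = Z * (J x * d i y) := by
    rw [← mul_assoc, x_mul_zeta J hJO hJz kk i x, mul_assoc]
  have h2 : (Z * d i x) * (Z * d i y) = 0 := by
    calc (Z * d i x) * (Z * d i y) = Z * ((d i x * Z) * d i y) := by
          rw [mul_assoc, ← mul_assoc (d i x) Z (d i y)]
      _ = Z * ((Z * J (d i x)) * d i y) := by rw [x_mul_zeta J hJO hJz kk i (d i x)]
      _ = (Z * Z) * (J (d i x) * d i y) := by rw [mul_assoc Z (J (d i x)) (d i y),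
            ← mul_assoc Z Z _]
      _ = 0 := by rw [hZ, zeta_sq, zero_mul]
  have expand : (x - Z * d i x) * (y - Z * d i y)
      = x * y - x * (Z * d i y) - (Z * d i x) * y + (Z * d i x) * (Z * d i y) := by
    noncomm_ring
  rw [expand, h1, h2, add_zero, hdL i x y, mul_add, mul_assoc Z (d i x) y]
  abel

/-- the sets of generators interpolating between `SGen kk 0 ⊇ TSet ∪ {ζ_kk^i}` and `TSet` -/
def SGen (kk : Fin n) (j : ℕ) : Set (OStar K n N O) :=
  TSet (K := K) (n := n) (N := N) (O := O)
    ∪ {x | ∃ i : Fin N, j ≤ (i : ℕ) ∧ x = zetaVar K n N O kk i}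

lemma odd_descent (kk : Fin n)
    (hJO : ∀ o : O, J (o ⊗ₜ[K] 1) = o ⊗ₜ[K] 1)
    (hJz : ∀ k i, J (zetaVar K n N O k i) = -(zetaVar K n N O k i))
    (hdL : ∀ i x y, d i (x * y) = d i x * y + J x * d i y)
    (hdz : ∀ i k, d i (zVar K n N O k) = 0)
    (hdzeta : ∀ i k j, d i (zetaVar K n N O k j) = if j = i then 1 else 0) :
    ∀ (t j : ℕ), j + t = N →
      ∀ x ∈ Algebra.adjoin K (SGen (K := K) (n := n) (N := N) (O := O) kk j),
        (∀ i, d i x = 0) → x ∈ Algebra.adjoin K (TSet (K := K) (n := n) (N := N) (O := O)) := by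
  intro t
  induction t with
  | zero =>
      intro j hj x hx _
      refine Algebra.adjoin_mono ?_ hx
      rintro g (hg | ⟨i, hi, rfl⟩)
      · exact hg
      · exact absurd i.2 (by omega)
  | succ t ih =>
      intro j hj x hx hdx
      have hjN : j < N := by omega
      set i0 : Fin N := ⟨j, hjN⟩ with hi0
      set Z := zetaVar K n N O kk i0 with hZ
      have key : ∀ w ∈ Algebra.adjoin K (SGen (K := K) (n := n) (N := N) (O := O) kk j),
          w - Z * d i0 w ∈
            Algebra.adjoin K (SGen (K := K) (n := n) (N := N) (O := O) kk (j + 1)) := by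
        intro w hw
        induction hw using Algebra.adjoin_induction with
        | mem g hg =>
            rcases hg with hg | ⟨i, hi, rfl⟩
            · rw [dT_zero J d i0 hdL hdz hdzeta g hg, mul_zero, sub_zero]
              exact Algebra.subset_adjoin (Or.inl hg)
            · rw [hdzeta]
              by_cases hii : i = i0
              · subst hii
                rw [if_pos rfl, mul_one, hZ, sub_self]
                exact zero_mem _
              · rw [if_neg hii, mul_zero, sub_zero]
                refine Algebra.subset_adjoin (Or.inr ⟨i, ?_, rfl⟩)
                have hji : (i0 : ℕ) = j := rfl
                have hvi : (i : ℕ) ≠ j := fun hc => hii (Fin.ext (hc.trans hji.symm))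
                omega
        | algebraMap r =>
            rw [di_algebraMap J d i0 hdL, mul_zero, sub_zero]
            exact algebraMap_mem _ r
        | add a b ha hb pa pb =>
            have : (a + b) - Z * d i0 (a + b)
                = (a - Z * d i0 a) + (b - Z * d i0 b) := by
              rw [map_add, mul_add]; abel
            rw [this]; exact add_mem pa pb
        | mul a b ha hb pa pb =>
            rw [sigma_map_mul J d i0 kk hJO hJz hdL a b]
            exact mul_mem pa pb
      have hx1 := key x hx
      rw [hdx i0, mul_zero, sub_zero] at hx1
      exact ih (j + 1) (by omega) x hx1 hdx

end Ops
end Aux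

/-- The translation-invariant subalgebra
`Ker(δ⁰) ∩ Ker(δ¹) ∩ ⋯ ∩ Ker(δ^N) ⊆ O_n^★`, where `δ⁰ = Σ_k ∂_{z_k}` and
`δ^i = Σ_k ∂_{ζ_k^i}`, equals the subalgebra `O_n^{★T}` generated by the
`z_{k,l}^{±1}` and the `ζ_{k,l}^i = ζ_k^i − ζ_l^i` for `1 ≤ k < l ≤ n`. -/
theorem translation_invariants_eq_OStarT
    (J : OStar K n N O →ₐ[K] OStar K n N O)
    (hJO : ∀ o : O, J (o ⊗ₜ[K] 1) = o ⊗ₜ[K] 1)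
    (hJz : ∀ k i, J (zetaVar K n N O k i) = -(zetaVar K n N O k i))
    -- `δ⁰ = Σ_k ∂_{z_k}`, the even translation derivation:
    (d0 : OStar K n N O →ₗ[K] OStar K n N O)
    (hd0L : ∀ x y, d0 (x * y) = d0 x * y + x * d0 y)
    (hd0z : ∀ k, d0 (zVar K n N O k) = 1)
    (hd0zeta : ∀ k i, d0 (zetaVar K n N O k i) = 0)
    -- `δ^i = Σ_k ∂_{ζ_k^i}`, the odd translation superderivations:
    (d : Fin N → OStar K n N O →ₗ[K] OStar K n N O)
    (hdL : ∀ i x y, d i (x * y) = d i x * y + J x * d i y)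
    (hdz : ∀ i k, d i (zVar K n N O k) = 0)
    (hdzeta : ∀ i k j, d i (zetaVar K n N O k j) = if j = i then 1 else 0) :
    {x : OStar K n N O | d0 x = 0 ∧ ∀ i : Fin N, d i x = 0} =
      ↑(Algebra.adjoin K
        {x : OStar K n N O | ∃ k l : Fin n, ∃ h : k < l,
          x = zDiff K n N O k l ∨ x = zDiffInv K n N O k l h.ne ∨
          ∃ i : Fin N, x = zetaVar K n N O k i - zetaVar K n N O l i}) := by
  ext x
  simp only [Set.mem_setOf_eq, SetLike.mem_coe]
  constructor
  · rintro ⟨hx0, hxi⟩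
    show x ∈ Algebra.adjoin K (TSet (K := K) (n := n) (N := N) (O := O))
    rcases Nat.eq_zero_or_pos n with hn | hn
    · subst hn
      refine Algebra.adjoin_mono ?_ (mem_adjoin_GSet x)
      rintro g (⟨k, _⟩ | ⟨k, l, h, _⟩ | ⟨k, i, _⟩) <;> exact k.elim0
    · obtain ⟨m, rfl⟩ : ∃ m, n = m + 1 := ⟨n - 1, by omega⟩
      set kk : Fin (m + 1) := Fin.last m with hkk
      set z := zVar K (m + 1) N O kk with hz
      have hzc : ∀ w, z * w = w * z := fun w => zVar_comm kk w
      have hnil : ∀ w, ∃ mm : ℕ, (d0 ^ mm) w = 0 :=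
        fun w => locally_nilpotent d0 hd0L hd0z hd0zeta w
      choose ν hν using hnil
      have p0_eq : ∀ (w) (mm : ℕ), (d0 ^ mm) w = 0 →
          expS z d0 (ν w) w = expS z d0 mm w := by
        intro w mm hmm
        have h1 := expS_stab d0 z (ν w) (max (ν w) mm) w (hν w) (le_max_left _ _)
        have h2 := expS_stab d0 z mm (max (ν w) mm) w hmm (le_max_right _ _)
        exact h1.symm.trans h2
      have hp0mem : ∀ w, expS z d0 (ν w) w ∈
          Algebra.adjoin K (SGen (K := K) (n := m + 1) (N := N) (O := O) kk 0) := by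
        intro w
        induction (mem_adjoin_GSet w) using Algebra.adjoin_induction with
        | mem g hg =>
            rcases hg with ⟨k, rfl⟩ | ⟨k, l, hkl, rfl⟩ | ⟨k, i, rfl⟩
            · have h2 : (d0 ^ 2) (zVar K (m + 1) N O k) = 0 := by
                rw [pow_succ, Module.End.mul_apply, hd0z, pow_one, d0_one d0 hd0L]
              rw [p0_eq _ 2 h2, expS_zVar d0 z hd0L hd0z k]
              by_cases hkkk : k = kk
              · rw [hz, hkkk, sub_self]; exact zero_mem _
              · rw [hz, ← zDiff_eq k kk]
                exact Algebra.adjoin_mono Set.subset_union_left (zDiff_mem k kk hkkk)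
            · have h1 : (d0 ^ 1) (zDiffInv K (m + 1) N O k l hkl) = 0 := by
                rw [pow_one]; exact d0_zDiffInv d0 hd0L hd0z k l hkl
              rw [p0_eq _ 1 h1, expS_one]
              exact Algebra.adjoin_mono Set.subset_union_left (zDiffInv_mem k l hkl)
            · have h1 : (d0 ^ 1) (zetaVar K (m + 1) N O k i) = 0 := by
                rw [pow_one, hd0zeta]
              rw [p0_eq _ 1 h1, expS_one]
              by_cases hkkk : k = kk
              · subst hkkk
                exact Algebra.subset_adjoin (Or.inr ⟨i, Nat.zero_le _, rfl⟩)
              · rw [show zetaVar K (m + 1) N O k i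
                    = (zetaVar K (m + 1) N O k i - zetaVar K (m + 1) N O kk i)
                      + zetaVar K (m + 1) N O kk i from (sub_add_cancel _ _).symm]
                exact add_mem
                  (Algebra.adjoin_mono Set.subset_union_left (zetaDiff_mem k kk i hkkk))
                  (Algebra.subset_adjoin (Or.inr ⟨i, Nat.zero_le _, rfl⟩))
        | algebraMap r =>
            rw [p0_eq _ 1 (by rw [pow_one]; exact d0_algebraMap d0 hd0L r), expS_one]
            exact algebraMap_mem _ r
        | add a b ha hb pa pb =>
            have hma : (d0 ^ max (ν a) (ν b)) a = 0 :=
              nil_mono d0 (ν a) _ a (le_max_left _ _) (hν a)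
            have hmb : (d0 ^ max (ν a) (ν b)) b = 0 :=
              nil_mono d0 (ν b) _ b (le_max_right (ν a) (ν b)) (hν b)
            have hab : (d0 ^ max (ν a) (ν b)) (a + b) = 0 := by
              rw [map_add, hma, hmb, add_zero]
            rw [p0_eq _ _ hab, expS_add, ← p0_eq a _ hma, ← p0_eq b _ hmb]
            exact add_mem pa pb
        | mul a b ha hb pa pb =>
            have hab : (d0 ^ (ν a + ν b)) (a * b) = 0 :=
              nil_mul d0 hd0L (ν a + ν b) (ν a) (ν b) a b le_rfl (hν a) (hν b)
            rw [p0_eq _ _ hab, expS_mul d0 z hd0L hzc (ν a) (ν b) a b (hν a) (hν b),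
              ← p0_eq a _ (hν a), ← p0_eq b _ (hν b)]
            exact mul_mem pa pb
      have hp0x : expS z d0 (ν x) x = x := by
        rw [p0_eq x 1 (by rw [pow_one, hx0])]; exact expS_one d0 z x
      have hx' := hp0x ▸ hp0mem x
      exact odd_descent J d kk hJO hJz hdL hdz hdzeta N 0 (by omega) x hx' hxi
  · intro hx
    induction hx using Algebra.adjoin_induction with
    | mem g hg =>
        obtain ⟨k, l, hkl, hg⟩ := hg
        rcases hg with rfl | rfl | ⟨i, rfl⟩
        · exact ⟨d0_zDiff d0 hd0z k l, fun i => di_zDiff d i hdz k l⟩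
        · exact ⟨d0_zDiffInv d0 hd0L hd0z k l hkl.ne,
            fun i => di_zDiffInv J d i hdL hdz k l hkl.ne⟩
        · exact ⟨by rw [map_sub, hd0zeta, hd0zeta, sub_self],
            fun i' => by rw [map_sub, hdzeta, hdzeta, sub_self]⟩
    | algebraMap r =>
        exact ⟨d0_algebraMap d0 hd0L r, fun i => di_algebraMap J d i hdL r⟩
    | add a b ha hb pa pb =>
        exact ⟨by rw [map_add, pa.1, pb.1, add_zero],
          fun i => by rw [map_add, pa.2 i, pb.2 i, add_zero]⟩
    | mul a b ha hb pa pb =>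
        exact ⟨by rw [hd0L, pa.1, pb.1, zero_mul, mul_zero, add_zero],
          fun i => by rw [hdL, pa.2 i, pb.2 i, zero_mul, mul_zero, add_zero]⟩


end
end SUSYW19
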